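/- arXiv:1703.06479 — 2 statements merged into one kernel-verified Lean document; each statement's English description precedes it below -/
import Mathlib

section
/- With R, A, δ, φ and P_n as above (ghost components of the universal map A → W(A)), for all n ≥ 1 one has the explicit expansion P_n(x) = Σ_{i=0}^{n−1} Σ_{j=1}^{q^{n−1−i}} π^{i+j−n} · C(q^{n−1−i}, j) · P_i(x)^{q(q^{n−1−i}−j)} · (δ P_i(x))^j, where C(·,·) denotes the binomial coefficient. -/
lemma stmt6_aux {A : Type*} [CommRing A] (a d c : A) (q N : ℕ) :
    (a ^ q + c * d) ^ N = a ^ (q * N) +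
      ∑ j ∈ Finset.Icc 1 N, c ^ j * (N.choose j : A) * a ^ (q * (N - j)) * d ^ j := by
  rw [add_pow, Finset.sum_range_succ, Nat.choose_self, Nat.cast_one, Nat.sub_self, pow_zero,
    mul_one, mul_one, ← pow_mul, add_comm]
  congr 1
  refine Finset.sum_nbij' (fun k => N - k) (fun j => N - j) ?_ ?_ ?_ ?_ ?_
  · intro k hk; simp only [Finset.mem_range] at hk; simp [Finset.mem_Icc]; omega
  · intro j hj; simp only [Finset.mem_Icc] at hj; simp [Finset.mem_range]; omega
  · intro k hk; simp only [Finset.mem_range] at hk; omega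
  · intro j hj; simp only [Finset.mem_Icc] at hj; omega
  · intro k hk
    simp only [Finset.mem_range] at hk
    have h1 : N - (N - k) = k := by omega
    rw [h1, Nat.choose_symm (by omega : k ≤ N), mul_pow, ← pow_mul]
    ring

/-- The explicit expansion of `P_n(x)` (multiplied through by `π^n`
to clear the negative powers `π^{i+j-n}`):
`π^n P_n(x) = Σ_{i=0}^{n-1} Σ_{j=1}^{q^{n-1-i}} π^{i+j} C(q^{n-1-i}, j)
  P_i(x)^{q(q^{n-1-i}-j)} (δ P_i(x))^j`. -/
theorem stmt_6 {R A : Type*} [CommRing R] [IsDomain R] [IsDiscreteValuationRing R]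
    [CommRing A] [Algebra R A]
    (π : R) (hπ : Irreducible π)
    (hcomp : IsAdicComplete (Ideal.span {π} : Ideal R) R)
    (q : ℕ) (hq : Nat.card (R ⧸ (Ideal.span {π} : Ideal R)) = q)
    (htf : ∀ a : A, algebraMap R A π * a = 0 → a = 0)
    (δ : A → A) (φ : A →+* A)
    (hφδ : ∀ x : A, φ x = x ^ q + algebraMap R A π * δ x)
    (hφR : ∀ r : R, φ (algebraMap R A r) = algebraMap R A r)
    (P : ℕ → A → A) (hP0 : ∀ x : A, P 0 x = x)
    (hghost : ∀ (n : ℕ) (x : A),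
      ∑ i ∈ Finset.range (n + 1), algebraMap R A π ^ i * (P i x) ^ (q ^ (n - i)) = (⇑φ)^[n] x)
    (n : ℕ) (hn : 1 ≤ n) (x : A) :
    algebraMap R A π ^ n * P n x =
      ∑ i ∈ Finset.range n, ∑ j ∈ Finset.Icc 1 (q ^ (n - 1 - i)),
        algebraMap R A π ^ (i + j) * ((q ^ (n - 1 - i)).choose j : A) *
          (P i x) ^ (q * (q ^ (n - 1 - i) - j)) * (δ (P i x)) ^ j := by
  obtain ⟨m, rfl⟩ : ∃ m, n = m + 1 := ⟨n - 1, by omega⟩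
  have h2 := hghost m x
  have h1 := hghost (m + 1) x
  rw [Function.iterate_succ_apply', ← h2, map_sum] at h1
  have key : ∀ i ∈ Finset.range (m + 1),
      φ (algebraMap R A π ^ i * P i x ^ q ^ (m - i)) =
      algebraMap R A π ^ i * P i x ^ q ^ (m + 1 - i) +
      ∑ j ∈ Finset.Icc 1 (q ^ (m + 1 - 1 - i)),
        algebraMap R A π ^ (i + j) * ((q ^ (m + 1 - 1 - i)).choose j : A) *
          (P i x) ^ (q * (q ^ (m + 1 - 1 - i) - j)) * (δ (P i x)) ^ j := by
    intro i hi
    simp only [Finset.mem_range] at hi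
    have hmi : m + 1 - 1 - i = m - i := by omega
    have hqe : q * q ^ (m - i) = q ^ (m + 1 - i) := by
      rw [← pow_succ']; congr 1; omega
    rw [map_mul, map_pow, map_pow, hφR, hφδ, hmi,
      stmt6_aux (P i x) (δ (P i x)) (algebraMap R A π) q (q ^ (m - i)),
      hqe, mul_add, Finset.mul_sum]
    congr 1
    apply Finset.sum_congr rfl
    intro j hj
    rw [pow_add]
    ring
  rw [Finset.sum_congr rfl key, Finset.sum_add_distrib, Finset.sum_range_succ] at h1
  simp only [Nat.sub_self, pow_zero, pow_one] at h1
  exact add_left_cancel h1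
end

section
/- Let R be an equal-characteristic complete DVR, A a π-torsion-free, separated, π-adically complete R-algebra with Frobenius lift φ inducing an isomorphism on A₀ = A/πA, and suppose the base B is a k-algebra so that R ≅ k[[π]]. Then for every n ≥ 0 there is an isomorphism A/π^{n+1}A ≅ A^δ ⊗_k (R/π^{n+1}R), compatible with reduction maps. -/
section Stmt18Aux
variable {A : Type*} [CommRing A]

theorem stmt18_cancel {ϖ : A} (htf : ∀ a : A, ϖ * a = 0 → a = 0)
    {a b : A} (hab : ϖ * a = ϖ * b) : a = b :=
  sub_eq_zero.mp (htf (a - b) (by rw [mul_sub, hab, sub_self]))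

theorem stmt18_dvdφ {ϖ : A} (htf : ∀ a : A, ϖ * a = 0 → a = 0)
    (φ : A →+* A) (hφϖ : φ ϖ = ϖ)
    (hφinj : ∀ x : A, ϖ ∣ φ x → ϖ ∣ x) :
    ∀ (n : ℕ) (c : A), ϖ ^ n ∣ φ c → ϖ ^ n ∣ c := by
  intro n
  induction n with
  | zero => intro c _; simpa using one_dvd c
  | succ n ih =>
    intro c hc
    have h1 : ϖ ∣ φ c := dvd_trans (dvd_pow_self ϖ (Nat.succ_ne_zero n)) hc
    obtain ⟨c', rfl⟩ := hφinj c h1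
    obtain ⟨t, ht⟩ := hc
    have hφ : φ (ϖ * c') = ϖ * φ c' := by rw [map_mul, hφϖ]
    have h2 : ϖ * φ c' = ϖ * (ϖ ^ n * t) := by
      rw [← hφ, ht, pow_succ, mul_comm (ϖ ^ n) ϖ, mul_assoc]
    have h4 : ϖ ^ n ∣ c' := ih c' ⟨t, stmt18_cancel htf h2⟩
    obtain ⟨s, rfl⟩ := h4
    exact ⟨s, by ring⟩

theorem stmt18_exists {q : ℕ} (hq2 : 2 ≤ q) {ϖ : A}
    (φ : A →+* A) (hφϖ : φ ϖ = ϖ)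
    (hfrobpow : ∀ (n : ℕ) (x y : A), (x - y) ^ q ^ n = x ^ q ^ n - y ^ q ^ n)
    (hφq : ∀ x : A, ϖ ∣ φ x - x ^ q)
    (hφsurj : ∀ y : A, ∃ x : A, ϖ ∣ y - φ x)
    (hH : ∀ x : A, (∀ n : ℕ, ϖ ^ n ∣ x) → x = 0)
    (hP : ∀ f : ℕ → A, (∀ m n : ℕ, m ≤ n → ϖ ^ m ∣ f n - f m) →
      ∃ L : A, ∀ n : ℕ, ϖ ^ n ∣ f n - L) :
    ∀ x : A, ∃ a : A, φ a = a ^ q ∧ ϖ ∣ x - a := by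
  intro x
  have hqn : ∀ n : ℕ, n + 1 ≤ q ^ n := by
    intro n
    calc n + 1 ≤ 2 ^ n := Nat.succ_le_of_lt (Nat.lt_two_pow_self (n := n))
    _ ≤ q ^ n := Nat.pow_le_pow_left hq2 n
  have hmono : ∀ {m k : ℕ} {d : A}, m ≤ k → ϖ ^ k ∣ d → ϖ ^ m ∣ d :=
    fun h hd => dvd_trans (pow_dvd_pow ϖ h) hd
  have key : ∀ (n : ℕ) (u v : A), ϖ ∣ u - v → ϖ ^ (n + 1) ∣ u ^ q ^ n - v ^ q ^ n := by
    intro n u v ⟨t, ht⟩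
    rw [← hfrobpow, ht, mul_pow]
    exact Dvd.dvd.mul_right (hmono (hqn n) dvd_rfl) _
  set step : A → A := fun y => Classical.choose (hφsurj y) with hstepdef
  have hstep : ∀ y : A, ϖ ∣ y - φ (step y) := fun y => Classical.choose_spec (hφsurj y)
  set z : ℕ → A := fun n => step^[n] x with hzdef
  have hz0 : z 0 = x := rfl
  have hzsucc : ∀ n, z (n + 1) = step (z n) := by
    intro n; simp only [hzdef, Function.iterate_succ_apply']
  have hz : ∀ n, ϖ ∣ z n - φ (z (n + 1)) := by
    intro n; rw [hzsucc]; exact hstep (z n)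
  set a : ℕ → A := fun n => z n ^ q ^ n with hadef
  have hzq : ∀ n, ϖ ∣ z (n + 1) ^ q - z n := by
    intro n
    have h1 : ϖ ∣ φ (z (n + 1)) - z (n + 1) ^ q := hφq _
    have h2 : ϖ ∣ z n - φ (z (n + 1)) := hz n
    have : z (n + 1) ^ q - z n = -((φ (z (n+1)) - z (n+1) ^ q) + (z n - φ (z (n+1)))) := by
      ring
    rw [this]
    exact dvd_neg.mpr (dvd_add h1 h2)
  have hstep2 : ∀ n, ϖ ^ (n + 1) ∣ a (n + 1) - a n := by
    intro n
    have h1 : a (n + 1) = (z (n + 1) ^ q) ^ q ^ n := by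
      simp only [hadef, ← pow_mul, pow_succ, mul_comm]
    rw [h1]
    exact key n _ _ (hzq n)
  have hcauchy : ∀ m n : ℕ, m ≤ n → ϖ ^ m ∣ a n - a m := by
    intro m n hmn
    induction n, hmn using Nat.le_induction with
    | base => simp
    | succ n hmn ih =>
      have : a (n + 1) - a m = (a (n + 1) - a n) + (a n - a m) := by ring
      rw [this]
      exact dvd_add (hmono (by omega) (hstep2 n)) ih
  obtain ⟨L, hL⟩ := hP a hcauchy
  have ha0 : a 0 = x := by simp [hadef, hz0]
  refine ⟨L, ?_, ?_⟩
  · have hsub : ∀ n : ℕ, ϖ ^ n ∣ φ L - L ^ q := by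
      intro n
      have c1 : ϖ ^ n ∣ φ L - φ (a n) := by
        obtain ⟨t, ht⟩ := (hL n)
        have : L - a n = ϖ ^ n * (-t) := by rw [← neg_sub, ht]; ring
        rw [← map_sub, this, map_mul, map_pow, hφϖ]
        exact Dvd.dvd.mul_right dvd_rfl _
      have c2 : ϖ ^ n ∣ φ (a n) - a n ^ q := by
        have h1 : φ (a n) = (φ (z n)) ^ q ^ n := by rw [hadef]; exact map_pow φ _ _
        have h2 : a n ^ q = (z n ^ q) ^ q ^ n := by
          simp only [hadef, ← pow_mul, mul_comm]
        rw [h1, h2]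
        exact hmono (by omega) (key n _ _ (hφq (z n)))
      have c3 : ϖ ^ n ∣ a n ^ q - L ^ q := by
        obtain ⟨t, ht⟩ := hL n
        have hq1 : (a n - L) ^ q = a n ^ q - L ^ q := by
          have := hfrobpow 1 (a n) L
          rwa [pow_one] at this
        rw [← hq1, ht, mul_pow, ← pow_mul]
        exact Dvd.dvd.mul_right (hmono (Nat.le_mul_of_pos_right n (by omega)) dvd_rfl) _
      have : φ L - L ^ q = (φ L - φ (a n)) + (φ (a n) - a n ^ q) + (a n ^ q - L ^ q) := by
        ring
      rw [this]
      exact dvd_add (dvd_add c1 c2) c3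
    exact sub_eq_zero.mp (hH _ hsub)
  · have h1 : ϖ ∣ a 1 - L := by have := hL 1; rwa [pow_one] at this
    have h2 : ϖ ∣ a 1 - a 0 := by simpa using hstep2 0
    have : x - L = (a 1 - L) - (a 1 - a 0) := by rw [ha0]; ring
    rw [this]
    exact dvd_sub h1 h2

theorem stmt18_unique {q : ℕ} (hq2 : 2 ≤ q) {ϖ : A}
    (htf : ∀ a : A, ϖ * a = 0 → a = 0)
    (φ : A →+* A) (hφϖ : φ ϖ = ϖ)
    (hφinj : ∀ x : A, ϖ ∣ φ x → ϖ ∣ x)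
    (hfrob1 : ∀ x y : A, (x - y) ^ q = x ^ q - y ^ q)
    (hH : ∀ x : A, (∀ n : ℕ, ϖ ^ n ∣ x) → x = 0)
    {a b : A} (ha : φ a = a ^ q) (hb : φ b = b ^ q) (hab : ϖ ∣ a - b) : a = b := by
  have key : ∀ n : ℕ, ϖ ^ (n + 1) ∣ a - b := by
    intro n
    induction n with
    | zero => simpa using hab
    | succ n ih =>
      have hφab : φ (a - b) = (a - b) ^ q := by rw [map_sub, ha, hb, hfrob1]
      obtain ⟨t, ht⟩ := ih
      have : ϖ ^ (n + 2) ∣ φ (a - b) := by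
        rw [hφab, ht, mul_pow, ← pow_mul]
        have h1 : n + 2 ≤ (n + 1) * q := by nlinarith
        exact Dvd.dvd.mul_right (dvd_trans (pow_dvd_pow ϖ h1) dvd_rfl) _
      exact stmt18_dvdφ htf φ hφϖ hφinj (n + 2) _ this
  refine sub_eq_zero.mp (hH (a - b) ?_)
  intro n
  cases n with
  | zero => simpa using one_dvd (a - b)
  | succ n => exact key n

end Stmt18Aux

/-- In the setting of Theorem `iso` (equal characteristic,
`R ≅ k[[π]]`): for every `n ≥ 0` there is an isomorphism
`A/π^{n+1}A ≅ A^δ ⊗_k R/π^{n+1}R ≅ A^δ[π]/(π^{n+1})` (rendered here as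
`(A^δ)[X]/(X^{n+1})`), compatibly with the reduction maps. -/
theorem stmt_18 {R A : Type*} [CommRing R] [IsDomain R] [IsDiscreteValuationRing R]
    [CommRing A] [Algebra R A]
    (p : ℕ) (hp : p.Prime) [CharP R p]
    (π : R) (hπ : Irreducible π)
    (hcomp : IsAdicComplete (Ideal.span {π} : Ideal R) R)
    (q h : ℕ) (hq : Nat.card (R ⧸ (Ideal.span {π} : Ideal R)) = q) (hqp : q = p ^ h)
    (hh : 1 ≤ h)
    (htf : ∀ a : A, algebraMap R A π * a = 0 → a = 0)
    (hcompA : IsAdicComplete (Ideal.span {algebraMap R A π} : Ideal A) A)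
    (δ : A → A) (φ : A →+* A)
    (hφδ : ∀ x : A, φ x = x ^ q + algebraMap R A π * δ x)
    (hφR : ∀ r : R, φ (algebraMap R A r) = algebraMap R A r)
    (hφsurj : ∀ y : A, ∃ x : A, algebraMap R A π ∣ (y - φ x))
    (hφinj : ∀ x : A, algebraMap R A π ∣ φ x → algebraMap R A π ∣ x)
    (Aδ : Subring A) (hAδ : ∀ x : A, x ∈ Aδ ↔ δ x = 0) :
    ∃ e : (n : ℕ) → (A ⧸ (Ideal.span {algebraMap R A π ^ (n + 1)} : Ideal A)) ≃+*
        (Polynomial Aδ ⧸ (Ideal.span {(Polynomial.X : Polynomial Aδ) ^ (n + 1)})),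
      ∀ (n : ℕ) (x : A),
        Ideal.Quotient.factor
            (Ideal.span_singleton_le_span_singleton.mpr
              (pow_dvd_pow (Polynomial.X : Polynomial Aδ) (Nat.le_succ (n + 1))))
            (e (n + 1) (Ideal.Quotient.mk _ x)) =
          e n (Ideal.Quotient.mk _ x) := by
  classical
  set ϖ : A := algebraMap R A π with hϖdef
  have hq2 : 2 ≤ q := by
    subst hqp
    calc 2 ≤ p := hp.two_le
    _ ≤ p ^ h := Nat.le_self_pow (by omega) p
  have hφϖ : φ ϖ = ϖ := hφR π
  -- Frobenius additivity in characteristic p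
  have hfrob1 : ∀ x y : A, (x - y) ^ q = x ^ q - y ^ q := by
    rcases subsingleton_or_nontrivial A with hA | hA
    · intro x y; exact Subsingleton.elim _ _
    · have hpA : (p : A) = 0 := by
        calc (p : A) = algebraMap R A (p : R) := (map_natCast _ p).symm
        _ = algebraMap R A 0 := by rw [CharP.cast_eq_zero R p]
        _ = 0 := map_zero _
      haveI : CharP A p := by
        have h2 := CharP.ringChar_of_prime_eq_zero hp hpA
        rw [← h2]; exact ringChar.charP A
      haveI : Fact p.Prime := ⟨hp⟩
      intro x y
      rw [hqp]
      exact sub_pow_char_pow x y h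
  have hfrobpow : ∀ (n : ℕ) (x y : A), (x - y) ^ q ^ n = x ^ q ^ n - y ^ q ^ n := by
    intro n
    induction n with
    | zero => intro x y; simp
    | succ n ih =>
      intro x y
      rw [pow_succ, pow_mul, pow_mul, pow_mul, ih, hfrob1]
  -- conversions for adic completeness
  have hIpow : ∀ n : ℕ, ((Ideal.span {ϖ}) ^ n • ⊤ : Ideal A) = Ideal.span {ϖ ^ n} := by
    intro n
    rw [smul_eq_mul, Ideal.mul_top, Ideal.span_singleton_pow]
  have hH : ∀ x : A, (∀ n : ℕ, ϖ ^ n ∣ x) → x = 0 := by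
    intro x hx
    refine IsHausdorff.haus hcompA.toIsHausdorff x ?_
    intro n
    rw [SModEq.zero, hIpow n, Ideal.mem_span_singleton]
    exact hx n
  have hP : ∀ f : ℕ → A, (∀ m n : ℕ, m ≤ n → ϖ ^ m ∣ f n - f m) →
      ∃ L : A, ∀ n : ℕ, ϖ ^ n ∣ f n - L := by
    intro f hf
    have hf' : ∀ {m n : ℕ}, m ≤ n → f m ≡ f n [SMOD ((Ideal.span {ϖ}) ^ m • ⊤ : Ideal A)] := by
      intro m n hmn
      rw [SModEq.sub_mem, hIpow m, Ideal.mem_span_singleton]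
      have h1 := hf m n hmn
      have h2 : f m - f n = -(f n - f m) := by ring
      rw [h2]
      exact dvd_neg.mpr h1
    obtain ⟨L, hL⟩ := IsPrecomplete.prec hcompA.toIsPrecomplete (f := f) hf'
    refine ⟨L, fun n => ?_⟩
    have := hL n
    rwa [SModEq.sub_mem, hIpow n, Ideal.mem_span_singleton] at this
  have hφq : ∀ x : A, ϖ ∣ φ x - x ^ q := fun x => ⟨δ x, by rw [hφδ x]; ring⟩
  -- Teichmüller representatives
  have hT : ∀ x : A, ∃ a : A, a ∈ Aδ ∧ ϖ ∣ x - a := by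
    intro x
    obtain ⟨a, ha1, ha2⟩ := stmt18_exists hq2 φ hφϖ hfrobpow hφq hφsurj hH hP x
    refine ⟨a, (hAδ a).mpr ?_, ha2⟩
    have h1 : ϖ * δ a = 0 := by
      have h2 := hφδ a
      rw [ha1] at h2
      exact (left_eq_add.mp h2)
    exact htf _ h1
  have hU : ∀ a b : A, a ∈ Aδ → b ∈ Aδ → ϖ ∣ a - b → a = b := by
    intro a b ha hb hab
    have ha' : φ a = a ^ q := by rw [hφδ a, (hAδ a).mp ha, mul_zero, add_zero]
    have hb' : φ b = b ^ q := by rw [hφδ b, (hAδ b).mp hb, mul_zero, add_zero]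
    exact stmt18_unique hq2 htf φ hφϖ hφinj hfrob1 hH ha' hb' hab
  -- the evaluation homomorphism
  set g : Polynomial Aδ →+* A := Polynomial.eval₂RingHom (Subring.subtype Aδ) ϖ with hgdef
  have hgX : g Polynomial.X = ϖ := Polynomial.eval₂_X _ _
  have hgC : ∀ a : Aδ, g (Polynomial.C a) = (a : A) := fun a => Polynomial.eval₂_C _ _
  have hgdecomp : ∀ f : Polynomial Aδ, g f = g f.divX * ϖ + ((f.coeff 0 : Aδ) : A) := by
    intro f
    conv_lhs => rw [← Polynomial.divX_mul_X_add f]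
    rw [map_add, map_mul, hgX, hgC]
  have hcoeff0 : ∀ f : Polynomial Aδ, ϖ ∣ g f → f.coeff 0 = 0 := by
    intro f hf
    have h1 : ϖ ∣ ((f.coeff 0 : Aδ) : A) - 0 := by
      rw [sub_zero]
      have h2 : ((f.coeff 0 : Aδ) : A) = g f - g f.divX * ϖ := by rw [hgdecomp f]; ring
      rw [h2]
      exact dvd_sub hf (dvd_mul_left ϖ (g f.divX))
    have h3 : ((f.coeff 0 : Aδ) : A) = ((0 : Aδ) : A) := by
      rw [ZeroMemClass.coe_zero]
      exact hU _ _ (f.coeff 0).2 Aδ.zero_mem h1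
    exact Subtype.ext h3
  have hker : ∀ (n : ℕ) (f : Polynomial Aδ),
      ϖ ^ (n + 1) ∣ g f → (Polynomial.X : Polynomial Aδ) ^ (n + 1) ∣ f := by
    intro n
    induction n with
    | zero =>
      intro f hf
      rw [pow_one] at hf
      rw [pow_one, Polynomial.X_dvd_iff]
      exact hcoeff0 f hf
    | succ n ih =>
      intro f hf
      have h0 : f.coeff 0 = 0 :=
        hcoeff0 f (dvd_trans (dvd_pow_self ϖ (Nat.succ_ne_zero _)) hf)
      have hfX : f = f.divX * Polynomial.X := by
        have h1 := Polynomial.divX_mul_X_add f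
        rw [h0] at h1
        simpa using h1.symm
      have hgf : g f = g f.divX * ϖ := by
        conv_lhs => rw [hfX]
        rw [map_mul, hgX]
      obtain ⟨t, ht⟩ := hf
      have h2 : ϖ * g f.divX = ϖ * (ϖ ^ (n + 1) * t) := by
        rw [mul_comm ϖ (g f.divX), ← hgf, ht]; ring
      have h5 : ϖ ^ (n + 1) ∣ g f.divX := ⟨t, stmt18_cancel htf h2⟩
      obtain ⟨s, hs⟩ := ih f.divX h5
      refine ⟨s, ?_⟩
      rw [hfX, hs]; ring
  have hsurjg : ∀ (n : ℕ) (x : A), ∃ f : Polynomial Aδ, ϖ ^ (n + 1) ∣ x - g f := by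
    intro n
    induction n with
    | zero =>
      intro x
      obtain ⟨a, ha, hd⟩ := hT x
      exact ⟨Polynomial.C ⟨a, ha⟩, by rw [pow_one, hgC]; exact hd⟩
    | succ n ih =>
      intro x
      obtain ⟨a, ha, hd⟩ := hT x
      obtain ⟨x₁, hx₁⟩ := hd
      obtain ⟨f₁, hf₁⟩ := ih x₁
      refine ⟨Polynomial.C ⟨a, ha⟩ + Polynomial.X * f₁, ?_⟩
      have h1 : x - g (Polynomial.C ⟨a, ha⟩ + Polynomial.X * f₁) = ϖ * (x₁ - g f₁) := by
        rw [map_add, map_mul, hgX, hgC]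
        calc x - ((⟨a, ha⟩ : Aδ) + ϖ * g f₁) = (x - a) - ϖ * g f₁ := by ring
        _ = ϖ * x₁ - ϖ * g f₁ := by rw [hx₁]
        _ = ϖ * (x₁ - g f₁) := by ring
      rw [h1]
      obtain ⟨t, ht⟩ := hf₁
      exact ⟨t, by rw [ht]; ring⟩
  -- the quotient ring homomorphisms
  have hle : ∀ n : ℕ, ∀ f ∈ (Ideal.span {(Polynomial.X : Polynomial Aδ) ^ (n + 1)}),
      ((Ideal.Quotient.mk (Ideal.span {ϖ ^ (n + 1)} : Ideal A)).comp g) f = 0 := by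
    intro n f hf
    rw [Ideal.mem_span_singleton] at hf
    obtain ⟨c, rfl⟩ := hf
    rw [RingHom.comp_apply, map_mul, map_pow, hgX]
    rw [Ideal.Quotient.eq_zero_iff_mem, Ideal.mem_span_singleton]
    exact dvd_mul_right _ _
  set gbar : (n : ℕ) → (Polynomial Aδ ⧸ (Ideal.span {(Polynomial.X : Polynomial Aδ) ^ (n + 1)}))
      →+* (A ⧸ (Ideal.span {ϖ ^ (n + 1)} : Ideal A)) :=
    fun n => Ideal.Quotient.lift _ ((Ideal.Quotient.mk (Ideal.span {ϖ ^ (n + 1)} : Ideal A)).comp g) (hle n)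
    with hgbardef
  have hgbarmk : ∀ (n : ℕ) (f : Polynomial Aδ),
      gbar n (Ideal.Quotient.mk _ f) = Ideal.Quotient.mk _ (g f) := by
    intro n f
    rw [hgbardef]
    exact Ideal.Quotient.lift_mk _ _ _
  have hbij : ∀ n : ℕ, Function.Bijective (gbar n) := by
    intro n
    constructor
    · rw [injective_iff_map_eq_zero]
      intro z hz
      obtain ⟨f, rfl⟩ := Ideal.Quotient.mk_surjective z
      rw [hgbarmk, Ideal.Quotient.eq_zero_iff_mem, Ideal.mem_span_singleton] at hz
      rw [Ideal.Quotient.eq_zero_iff_mem, Ideal.mem_span_singleton]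
      exact hker n f hz
    · intro y
      obtain ⟨x, rfl⟩ := Ideal.Quotient.mk_surjective y
      obtain ⟨f, hf⟩ := hsurjg n x
      refine ⟨Ideal.Quotient.mk _ f, ?_⟩
      rw [hgbarmk, Ideal.Quotient.mk_eq_mk_iff_sub_mem, Ideal.mem_span_singleton]
      have h2 : g f - x = -(x - g f) := by ring
      rw [h2]
      exact dvd_neg.mpr hf
  refine ⟨fun n => (RingEquiv.ofBijective (gbar n) (hbij n)).symm, ?_⟩
  intro n x
  apply (hbij n).1
  have hrhs : gbar n ((RingEquiv.ofBijective (gbar n) (hbij n)).symm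
        (Ideal.Quotient.mk _ x)) = Ideal.Quotient.mk _ x :=
    (RingEquiv.ofBijective (gbar n) (hbij n)).apply_symm_apply _
  show gbar n _ = gbar n ((RingEquiv.ofBijective (gbar n) (hbij n)).symm (Ideal.Quotient.mk _ x))
  rw [hrhs]
  set y := (RingEquiv.ofBijective (gbar (n + 1)) (hbij (n + 1))).symm
    (Ideal.Quotient.mk _ x) with hydef
  have hy : gbar (n + 1) y = Ideal.Quotient.mk _ x :=
    (RingEquiv.ofBijective (gbar (n + 1)) (hbij (n + 1))).apply_symm_apply _
  obtain ⟨f, hf⟩ := Ideal.Quotient.mk_surjective y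
  show gbar n (Ideal.Quotient.factor _ y) = Ideal.Quotient.mk _ x
  rw [← hf, Ideal.Quotient.factor_mk, hgbarmk]
  rw [← hf, hgbarmk] at hy
  rw [Ideal.Quotient.mk_eq_mk_iff_sub_mem] at hy ⊢
  rw [Ideal.mem_span_singleton] at hy ⊢
  exact dvd_trans (pow_dvd_pow ϖ (Nat.le_succ (n + 1))) hy
end
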